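/- Let G be a finite eulerian graph (a finite connected simple graph in which every vertex has even degree) and let k be a positive integer with k ≡ |E(G)| (mod 2). Then G admits a k-odd decomposition if and only if G contains at least k pairwise edge-disjoint odd circuits. -/

import Mathlib

open SimpleGraph

/-- An eulerian subgraph of `G`: a connected (hence vertex-nonempty) subgraph of `G`
in which every vertex has even degree. -/
def IsEulerianSubgraph {V : Type*} (G : SimpleGraph V) (H : G.Subgraph) : Prop :=
  H.Connected ∧ ∀ v ∈ H.verts, Even ((H.neighborSet v).ncard)

/-- A `k`-odd decomposition of `G`: a partition of the edge set of `G` into the edge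
sets of `k` eulerian subgraphs, each having an odd number of edges. -/
def IsKOddDecomposition {V : Type*} (G : SimpleGraph V) (k : ℕ)
    (D : Fin k → G.Subgraph) : Prop :=
  (∀ i, IsEulerianSubgraph G (D i)) ∧
  (∀ i, Odd ((D i).edgeSet.ncard)) ∧
  (∀ i j, i ≠ j → Disjoint ((D i).edgeSet) ((D j).edgeSet)) ∧
  (⋃ i, (D i).edgeSet) = G.edgeSet

/-- `G` contains `k` pairwise edge-disjoint odd circuits (cycles of odd length). -/
def HasKEdgeDisjointOddCircuits {V : Type*} (G : SimpleGraph V) (k : ℕ) : Prop :=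
  ∃ (u : Fin k → V) (c : (i : Fin k) → G.Walk (u i) (u i)),
    (∀ i, (c i).IsCycle) ∧
    (∀ i, Odd (c i).length) ∧
    (∀ i j, i ≠ j → ∀ e, e ∈ (c i).edges → e ∉ (c j).edges)


section AuxBasic
variable {α : Type*} {β : Type*}

lemma ncard_biUnion_eq [DecidableEq α] (T : Finset α) (A : α → Set β)
    (hfin : ∀ a, (A a).Finite)
    (hdj : ∀ a ∈ T, ∀ b ∈ T, a ≠ b → Disjoint (A a) (A b)) :
    (⋃ a ∈ T, A a).ncard = ∑ a ∈ T, (A a).ncard := by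
  induction T using Finset.induction with
  | empty => simp
  | @insert a T ha ih =>
    rw [Finset.set_biUnion_insert, Finset.sum_insert ha,
      Set.ncard_union_eq ?_ (hfin a) ?_, ih]
    · exact fun x hx y hy hxy => hdj x (Finset.mem_insert_of_mem hx) y
        (Finset.mem_insert_of_mem hy) hxy
    · exact Set.disjoint_iUnion₂_right.mpr fun b hb =>
        hdj a (Finset.mem_insert_self a T) b (Finset.mem_insert_of_mem hb)
          (fun h => ha (h ▸ hb))
    · exact Set.Finite.biUnion T.finite_toSet fun b _ => hfin b

lemma sum_mod_two_eq_card_filter_odd (T : Finset α) (w : α → ℕ) :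
    (∑ a ∈ T, w a) % 2 = (T.filter (fun a => Odd (w a))).card % 2 := by
  classical
  induction T using Finset.induction with
  | empty => simp
  | @insert a T ha ih =>
    rw [Finset.sum_insert ha, Finset.filter_insert]
    by_cases h : Odd (w a)
    · rw [if_pos h, Finset.card_insert_of_notMem (by simp [ha])]
      have h1 : w a % 2 = 1 := Nat.odd_iff.mp h
      omega
    · rw [if_neg h]
      have h0 : w a % 2 = 0 := Nat.even_iff.mp (Nat.not_odd_iff_even.mp h)
      omega
end AuxBasic

section WalkAux
variable {V : Type*} {G : SimpleGraph V}

lemma toSubgraph_adj_iff_mem_edges {u v x y : V} (p : G.Walk u v) :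
    p.toSubgraph.Adj x y ↔ s(x, y) ∈ p.edges := by
  rw [← SimpleGraph.Subgraph.mem_edgeSet, Walk.edgeSet_toSubgraph, Walk.mem_edgeSet]

lemma neighborSet_toSubgraph_eq {u v x : V} (p : G.Walk u v) :
    p.toSubgraph.neighborSet x = {y | s(x, y) ∈ p.edges} := by
  ext y; exact toSubgraph_adj_iff_mem_edges p

lemma image_neighborSet_toSubgraph [DecidableEq V] {u v x : V} (p : G.Walk u v) :
    (fun y => s(x, y)) '' (p.toSubgraph.neighborSet x) = {e | e ∈ p.edges ∧ x ∈ e} := by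
  ext e
  constructor
  · rintro ⟨y, hy, rfl⟩
    exact ⟨(toSubgraph_adj_iff_mem_edges p).mp hy, Sym2.mem_mk_left x y⟩
  · rintro ⟨he, hx⟩
    induction e with
    | h a b =>
      rcases Sym2.mem_iff.mp hx with rfl | rfl
      · exact ⟨b, (toSubgraph_adj_iff_mem_edges p).mpr he, rfl⟩
      · exact ⟨a, (toSubgraph_adj_iff_mem_edges p).mpr (by rwa [Sym2.eq_swap] at he),
          by rw [Sym2.eq_swap]⟩

lemma ncard_neighborSet_toSubgraph_eq_countP [DecidableEq V] {u v : V} {p : G.Walk u v}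
    (hp : p.IsTrail) (x : V) :
    (p.toSubgraph.neighborSet x).ncard = p.edges.countP (fun e => decide (x ∈ e)) := by
  have hinj : Set.InjOn (fun y => s(x, y)) (p.toSubgraph.neighborSet x) :=
    fun a _ b _ hab => Sym2.congr_right.mp hab
  have himg := image_neighborSet_toSubgraph (x := x) p
  have hfin : (p.toSubgraph.neighborSet x).Finite := p.finite_neighborSet_toSubgraph
  have h1 : (p.toSubgraph.neighborSet x).ncard
      = ({e | e ∈ p.edges ∧ x ∈ e} : Set (Sym2 V)).ncard := by
    rw [← himg, Set.ncard_image_of_injOn hinj]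
  have h2 : ({e | e ∈ p.edges ∧ x ∈ e} : Set (Sym2 V))
      = ↑((hp.edgesFinset).filter (fun e => x ∈ e)) := by
    ext e; simp [Walk.IsTrail.edgesFinset, and_comm]; exact fun _ => Iff.rfl
  rw [h1, h2, Set.ncard_coe_finset]
  rw [List.countP_eq_length_filter]
  rfl

lemma even_ncard_neighborSet_toSubgraph {u : V} {p : G.Walk u u}
    (hp : p.IsTrail) (x : V) :
    Even ((p.toSubgraph.neighborSet x).ncard) := by
  classical
  rw [ncard_neighborSet_toSubgraph_eq_countP hp x]
  exact (hp.even_countP_edges_iff x).mpr (fun h => absurd rfl h)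

lemma ncard_edgeSet_toSubgraph_eq_length {u v : V} {p : G.Walk u v} (hp : p.IsTrail) :
    p.toSubgraph.edgeSet.ncard = p.length := by
  have : p.toSubgraph.edgeSet = ↑(hp.edgesFinset) := by
    ext e; simp [Walk.IsTrail.edgesFinset]; exact Iff.rfl
  rw [this, Set.ncard_coe_finset]
  exact p.length_edges

/-- In a path starting at `v`, the only edge at `v` goes to `p.snd`. -/
lemma end_edge_eq_snd {v u x : V} (q : G.Walk v u) (hq : q.IsPath)
    (hx : s(v, x) ∈ q.edges) : x = q.getVert 1 := by
  induction q with
  | nil => simp at hx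
  | @cons a b c h q ih =>
    rw [Walk.edges_cons, List.mem_cons] at hx
    rcases hx with hx | hx
    · rw [Sym2.congr_right] at hx
      subst hx
      simp [Walk.getVert_cons_succ]
    · exact absurd (Walk.fst_mem_support_of_mem_edges q hx)
        ((Walk.cons_isPath_iff h q).mp hq).2

end WalkAux

section ConnOn
variable {α : Type*}

/-- Connectivity of a finite vertex set within an ambient graph: any two members are
joined by a walk whose support stays in the set. -/
def ConnOn (Γ : SimpleGraph α) (S : Finset α) : Prop :=
  ∀ a ∈ S, ∀ b ∈ S, ∃ p : Γ.Walk a b, ∀ x ∈ p.support, x ∈ S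

lemma connOn_peel [DecidableEq α] {Γ : SimpleGraph α} {S : Finset α} (hconn : ConnOn Γ S)
    {r : α} (hr : r ∈ S) (h2 : 2 ≤ S.card) :
    ∃ v ∈ S, v ≠ r ∧ ConnOn Γ (S.erase v) ∧ ∃ u ∈ S.erase v, Γ.Adj v u := by
  classical
  set DSet : α → Set ℕ := fun u =>
    {n | ∃ p : Γ.Walk r u, p.IsPath ∧ (∀ x ∈ p.support, x ∈ S) ∧ p.length = n} with hDSet
  have hne : ∀ u ∈ S, (DSet u).Nonempty := by
    intro u hu
    obtain ⟨p, hp⟩ := hconn r hr u hu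
    exact ⟨p.bypass.length, p.bypass, p.bypass_isPath,
      fun x hx => hp x (p.support_bypass_subset hx), rfl⟩
  set d : α → ℕ := fun u => sInf (DSet u) with hd
  have hmem : ∀ u ∈ S, d u ∈ DSet u := fun u hu => Nat.sInf_mem (hne u hu)
  have hle : ∀ u, ∀ n ∈ DSet u, d u ≤ n := fun u n hn => Nat.sInf_le hn
  have hdr : d r = 0 :=
    Nat.le_zero.mp (hle r 0 ⟨Walk.nil, Walk.IsPath.nil, by simpa using hr, rfl⟩)
  obtain ⟨v, hv, hmax⟩ := Finset.exists_max_image S d ⟨r, hr⟩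
  obtain ⟨s, hs, hsr⟩ := Finset.exists_mem_ne (lt_of_lt_of_le one_lt_two h2) r
  have hds : 1 ≤ d s := by
    by_contra h
    obtain ⟨p, _, _, hl⟩ := hmem s hs
    exact hsr (Walk.eq_of_length_eq_zero (p := p) (by omega)).symm
  have hdv : 1 ≤ d v := le_trans hds (hmax s hs)
  have hvr : v ≠ r := fun h => by rw [h, hdr] at hdv; omega
  -- every vertex other than `v` is reachable from `r` avoiding `v`
  have key : ∀ u ∈ S, u ≠ v → ∃ p : Γ.Walk r u, ∀ x ∈ p.support, x ∈ S.erase v := by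
    intro u hu huv
    obtain ⟨p, hp, hpS, hpl⟩ := hmem u hu
    refine ⟨p, fun x hx => Finset.mem_erase.mpr ⟨?_, hpS x hx⟩⟩
    by_cases hxu : x = u
    · exact hxu ▸ huv
    intro hxv
    have ht : (p.takeUntil x hx).length ∈ DSet x :=
      ⟨p.takeUntil x hx, hp.takeUntil hx, fun y hy => hpS y (p.support_takeUntil_subset hx hy),
        rfl⟩
    have hlt : (p.takeUntil x hx).length < p.length := by
      have hspec := p.take_spec hx
      have : p.length = (p.takeUntil x hx).length + (p.dropUntil x hx).length := by
        conv_lhs => rw [← hspec]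
        rw [Walk.length_append]
      have hd1 : (p.dropUntil x hx).length ≠ 0 := fun h0 =>
        hxu (Walk.eq_of_length_eq_zero h0)
      omega
    have : d x < d u := lt_of_le_of_lt (hle x _ ht) (by omega)
    have : d x < d v := lt_of_lt_of_le this (hmax u hu)
    rw [hxv] at this
    omega
  have hconn' : ConnOn Γ (S.erase v) := by
    intro a ha b hb
    obtain ⟨pa, hpa⟩ := key a (Finset.mem_of_mem_erase ha) (Finset.ne_of_mem_erase ha)
    obtain ⟨pb, hpb⟩ := key b (Finset.mem_of_mem_erase hb) (Finset.ne_of_mem_erase hb)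
    refine ⟨pa.reverse.append pb, fun x hx => ?_⟩
    rcases (Walk.mem_support_append_iff _ _).mp hx with h | h
    · exact hpa x (by rwa [Walk.support_reverse, List.mem_reverse] at h)
    · exact hpb x h
  refine ⟨v, hv, hvr, hconn', ?_⟩
  obtain ⟨pv, hpv, hpvS, hpvl⟩ := hmem v hv
  obtain ⟨w, hadj, q', hq⟩ := Walk.exists_eq_cons_of_ne hvr pv.reverse
  refine ⟨w, Finset.mem_erase.mpr ⟨?_, ?_⟩, ?_⟩
  · intro hwv
    have : pv.reverse.IsPath := hpv.reverse
    rw [hq, Walk.cons_isPath_iff] at this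
    exact this.2 (hwv ▸ q'.start_mem_support)
  · have hw : w ∈ pv.reverse.support := by
      rw [hq, Walk.support_cons]
      exact List.mem_cons_of_mem _ q'.start_mem_support
    rw [Walk.support_reverse, List.mem_reverse] at hw
    exact hpvS w hw
  · exact hadj
end ConnOn

section Partition
variable {α : Type*}

lemma connOn_mono {Γ : SimpleGraph α} {S T : Finset α} (h : S ⊆ T) {a b : α}
    (p : Γ.Walk a b) (hp : ∀ x ∈ p.support, x ∈ S) : ∀ x ∈ p.support, x ∈ T :=
  fun x hx => h (hp x hx)

lemma connOn_singleton (Γ : SimpleGraph α) (v : α) : ConnOn Γ ({v} : Finset α) := by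
  intro a ha b hb
  rw [Finset.mem_singleton] at ha hb
  subst ha; subst hb
  exact ⟨Walk.nil, by simp⟩

/-- From any set of points each joined to a common point `u` by internal walks,
produce internal walks between any two points. -/
lemma connOn_of_hub {Γ : SimpleGraph α} {S : Finset α} {u : α}
    (h : ∀ x ∈ S, ∃ p : Γ.Walk x u, ∀ y ∈ p.support, y ∈ S) : ConnOn Γ S := by
  intro a ha b hb
  obtain ⟨pa, hpa⟩ := h a ha
  obtain ⟨pb, hpb⟩ := h b hb
  refine ⟨pa.append pb.reverse, fun x hx => ?_⟩
  rcases (Walk.mem_support_append_iff _ _).mp hx with hx | hx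
  · exact hpa x hx
  · exact hpb x (by rwa [Walk.support_reverse, List.mem_reverse] at hx)

lemma connOn_split [DecidableEq α] {Γ : SimpleGraph α} (w : α → ℕ) :
    ∀ (S : Finset α), ConnOn Γ S → 2 ≤ (S.filter (fun a => Odd (w a))).card →
    ∃ T ⊆ S, T.Nonempty ∧ ConnOn Γ T ∧ (T.filter (fun a => Odd (w a))).card = 1 ∧
      ConnOn Γ (S \ T) ∧
      ((S \ T).filter (fun a => Odd (w a))).card
        = (S.filter (fun a => Odd (w a))).card - 1 := by
  intro S
  induction S using Finset.strongInduction with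
  | _ S IH =>
    intro hconn hodd2
    obtain ⟨r, hr⟩ : (S.filter (fun a => Odd (w a))).Nonempty :=
      Finset.card_pos.mp (by omega)
    have hrS : r ∈ S := Finset.mem_of_mem_filter r hr
    have hS2 : 2 ≤ S.card := le_trans hodd2 (Finset.card_le_card (Finset.filter_subset _ _))
    obtain ⟨v, hv, hvr, hconn', u0, hu0, hadj0⟩ := connOn_peel hconn hrS hS2
    by_cases hvodd : Odd (w v)
    · -- v itself is an odd vertex; T = {v}
      refine ⟨{v}, Finset.singleton_subset_iff.mpr hv, ⟨v, Finset.mem_singleton_self v⟩,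
        connOn_singleton Γ v, by rw [Finset.filter_singleton, if_pos hvodd, Finset.card_singleton], ?_, ?_⟩
      · rw [← Finset.erase_eq]; exact hconn'
      · rw [← Finset.erase_eq, Finset.filter_erase,
          Finset.card_erase_of_mem (Finset.mem_filter.mpr ⟨hv, hvodd⟩)]
    · -- v is even; recurse on S.erase v
      have hfe : (S.erase v).filter (fun a => Odd (w a)) = S.filter (fun a => Odd (w a)) := by
        rw [Finset.filter_erase, Finset.erase_eq_of_notMem]
        simp [hvodd]
      obtain ⟨T, hTsub, hTne, hTconn, hTcard, hRconn, hRcard⟩ :=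
        IH (S.erase v) (Finset.erase_ssubset hv) hconn' (by rw [hfe]; exact hodd2)
      have hvT : v ∉ T := fun h => (Finset.notMem_erase v S) (hTsub h)
      by_cases hex : ∃ u ∈ S.erase v \ T, Γ.Adj v u
      · -- attach v to the complement side
        obtain ⟨u, hu, hadj⟩ := hex
        have hsd : S \ T = insert v (S.erase v \ T) := by
          ext x
          simp only [Finset.mem_sdiff, Finset.mem_insert, Finset.mem_erase]
          constructor
          · rintro ⟨hxS, hxT⟩
            by_cases hxv : x = v
            · exact Or.inl hxv
            · exact Or.inr ⟨⟨hxv, hxS⟩, hxT⟩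
          · rintro (rfl | ⟨⟨_, hxS⟩, hxT⟩)
            · exact ⟨hv, hvT⟩
            · exact ⟨hxS, hxT⟩
        refine ⟨T, fun x hx => Finset.mem_of_mem_erase (hTsub hx), hTne, hTconn, hTcard, ?_, ?_⟩
        · rw [hsd]
          apply connOn_of_hub (u := u)
          intro x hx
          rcases Finset.mem_insert.mp hx with rfl | hx'
          · exact ⟨Walk.cons hadj Walk.nil, by
              intro y hy
              simp only [Walk.support_cons, Walk.support_nil, List.mem_cons,
                List.mem_singleton] at hy
              rcases hy with rfl | rfl | h
              · exact Finset.mem_insert_self _ _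
              · exact Finset.mem_insert_of_mem hu
              · exact absurd h List.not_mem_nil⟩
          · obtain ⟨p, hp⟩ := hRconn x hx' u hu
            exact ⟨p, fun y hy => Finset.mem_insert_of_mem (hp y hy)⟩
        · rw [hsd, Finset.filter_insert, if_neg hvodd, hRcard, hfe]
      · -- all neighbours of v in S.erase v lie in T; attach v to T
        have hu0T : u0 ∈ T := by
          by_contra h
          exact hex ⟨u0, Finset.mem_sdiff.mpr ⟨hu0, h⟩, hadj0⟩
        have hsd : S \ insert v T = S.erase v \ T := by
          ext x
          simp only [Finset.mem_sdiff, Finset.mem_insert, Finset.mem_erase, not_or]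
          tauto
        refine ⟨insert v T, ?_, ⟨v, Finset.mem_insert_self _ _⟩, ?_, ?_, ?_, ?_⟩
        · intro x hx
          rcases Finset.mem_insert.mp hx with rfl | hx'
          · exact hv
          · exact Finset.mem_of_mem_erase (hTsub hx')
        · apply connOn_of_hub (u := u0)
          intro x hx
          rcases Finset.mem_insert.mp hx with rfl | hx'
          · exact ⟨Walk.cons hadj0 Walk.nil, by
              intro y hy
              simp only [Walk.support_cons, Walk.support_nil, List.mem_cons,
                List.mem_singleton] at hy
              rcases hy with rfl | rfl | h
              · exact Finset.mem_insert_self _ _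
              · exact Finset.mem_insert_of_mem hu0T
              · exact absurd h List.not_mem_nil⟩
          · obtain ⟨p, hp⟩ := hTconn x hx' u0 hu0T
            exact ⟨p, fun y hy => Finset.mem_insert_of_mem (hp y hy)⟩
        · rw [Finset.filter_insert, if_neg hvodd, hTcard]
        · rw [hsd]; exact hRconn
        · rw [hsd, hRcard, hfe]
end Partition

section Part2
variable {α : Type*}

lemma connOn_partition [DecidableEq α] {Γ : SimpleGraph α} (w : α → ℕ) :
    ∀ (k : ℕ), 0 < k → ∀ (S : Finset α), ConnOn Γ S →
    k ≤ (S.filter (fun a => Odd (w a))).card →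
    (S.filter (fun a => Odd (w a))).card % 2 = k % 2 →
    ∃ P : Fin k → Finset α, (∀ i, ConnOn Γ (P i)) ∧ (∀ i, Odd (∑ a ∈ P i, w a)) ∧
      (∀ i j, i ≠ j → Disjoint (P i) (P j)) ∧ (∀ a, a ∈ S ↔ ∃ i, a ∈ P i) := by
  intro k
  induction k with
  | zero => omega
  | succ k IH =>
    intro _ S hconn hcard hpar
    rcases Nat.eq_zero_or_pos k with rfl | hk
    · -- k = 1
      refine ⟨fun _ => S, fun _ => hconn, fun _ => ?_, fun i j hij => absurd (Fin.ext (by omega)) hij, fun a => ?_⟩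
      · rw [Nat.odd_iff, sum_mod_two_eq_card_filter_odd, hpar]
      · exact ⟨fun h => ⟨0, h⟩, fun ⟨_, h⟩ => h⟩
    · obtain ⟨T, hTsub, hTne, hTconn, hTcard, hRconn, hRcard⟩ :=
        connOn_split w S hconn (by omega)
      have hc1 : 1 ≤ (S.filter (fun a => Odd (w a))).card := by omega
      obtain ⟨P', hP'conn, hP'odd, hP'disj, hP'cover⟩ :=
        IH hk (S \ T) hRconn (by omega) (by omega)
      have hPT : ∀ i, P' i ⊆ S \ T := fun i x hx => (hP'cover x).mpr ⟨i, hx⟩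
      refine ⟨Fin.cons T P', ?_, ?_, ?_, ?_⟩
      · intro i
        refine Fin.cases ?_ ?_ i
        · simpa using hTconn
        · intro j; simpa using hP'conn j
      · intro i
        refine Fin.cases ?_ ?_ i
        · simp only [Fin.cons_zero]
          rw [Nat.odd_iff, sum_mod_two_eq_card_filter_odd, hTcard]
        · intro j; simpa using hP'odd j
      · intro i j hij
        have hdTP : ∀ m, Disjoint T (P' m) := by
          intro m
          rw [Finset.disjoint_left]
          intro a haT haP
          exact (Finset.mem_sdiff.mp (hPT m haP)).2 haT
        rcases Fin.eq_zero_or_eq_succ i with rfl | ⟨i', rfl⟩ <;>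
          rcases Fin.eq_zero_or_eq_succ j with rfl | ⟨j', rfl⟩
        · exact absurd rfl hij
        · simpa using hdTP j'
        · simpa using (hdTP i').symm
        · have : i' ≠ j' := fun h => hij (congrArg Fin.succ h)
          simpa using hP'disj i' j' this
      · intro a
        constructor
        · intro ha
          by_cases haT : a ∈ T
          · exact ⟨0, by simpa using haT⟩
          · obtain ⟨i, hi⟩ := (hP'cover a).mp (Finset.mem_sdiff.mpr ⟨ha, haT⟩)
            exact ⟨i.succ, by simpa using hi⟩
        · rintro ⟨i, hi⟩
          rcases Fin.eq_zero_or_eq_succ i with rfl | ⟨i', rfl⟩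
          · exact hTsub (by simpa using hi)
          · exact (Finset.mem_sdiff.mp (hPT i' (by simpa using hi))).1
end Part2

section E
variable {V : Type*} {G : SimpleGraph V}

lemma Subgraph.edgeSet_deleteEdges' (H : G.Subgraph) (s : Set (Sym2 V)) :
    (H.deleteEdges s).edgeSet = H.edgeSet \ s := by
  ext e
  induction e with
  | h x y => simp [Subgraph.deleteEdges_adj, Subgraph.mem_edgeSet]

lemma exists_cycle_of_even_degree [Fintype V] {H : G.Subgraph}
    (hev : ∀ v, Even ((H.neighborSet v).ncard)) (hne : H.edgeSet.Nonempty) :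
    ∃ (v : V) (c : G.Walk v v), c.IsCycle ∧ ∀ e ∈ c.edges, e ∈ H.edgeSet := by
  classical
  set L : Set ℕ := {n | ∃ (u : V) (v : V) (p : G.Walk u v),
    p.IsPath ∧ (∀ e ∈ p.edges, e ∈ H.edgeSet) ∧ 1 ≤ p.length ∧ p.length = n} with hL
  have hLne : L.Nonempty := by
    obtain ⟨e, he⟩ := hne
    induction e with
    | h x y =>
      have hadj : H.Adj x y := Subgraph.mem_edgeSet.mp he
      refine ⟨1, x, y, Walk.cons (H.adj_sub hadj) Walk.nil, ?_, ?_, by simp, by simp⟩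
      · rw [Walk.cons_isPath_iff]
        exact ⟨Walk.IsPath.nil, by simp [(H.adj_sub hadj).ne]⟩
      · intro e' he'
        simp only [Walk.edges_cons, Walk.edges_nil, List.mem_singleton] at he'
        subst he'; exact he
  have hLbdd : ∀ n ∈ L, n ≤ Fintype.card V := by
    rintro n ⟨u, v, p, hp, -, -, rfl⟩
    have h1 : p.support.length = p.length + 1 := p.length_support
    have h2 : p.support.length ≤ Fintype.card V := hp.support_nodup.length_le_card
    omega
  obtain ⟨u, v, p, hp, hpH, hp1, hplen⟩ := Nat.sSup_mem hLne ⟨Fintype.card V, hLbdd⟩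
  have huv : v ≠ u := by
    rintro rfl
    rw [Walk.isPath_iff_eq_nil] at hp
    subst hp
    simp at hp1
  -- decompose the reverse to get the penultimate vertex
  have hq : p.reverse.IsPath := hp.reverse
  obtain ⟨w0, hadj0, q', hq'⟩ := Walk.exists_eq_cons_of_ne huv p.reverse
  have hw0H : s(v, w0) ∈ H.edgeSet := by
    apply hpH
    rw [← List.mem_reverse, ← Walk.edges_reverse, hq', Walk.edges_cons]
    exact List.mem_cons_self
  have hw0N : w0 ∈ H.neighborSet v := Subgraph.mem_edgeSet.mp hw0H
  have hNfin : (H.neighborSet v).Finite := Set.toFinite _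
  have hN1 : 1 ≤ (H.neighborSet v).ncard := (Set.ncard_pos hNfin).mpr ⟨w0, hw0N⟩
  have hN2 : 1 < (H.neighborSet v).ncard := by
    obtain ⟨m, hm⟩ := hev v
    omega
  obtain ⟨w, hwN, hww0⟩ := Set.exists_ne_of_one_lt_ncard hN2 w0
  have hvwH : s(v, w) ∈ H.edgeSet := Subgraph.mem_edgeSet.mpr hwN
  have hvwG : G.Adj v w := H.adj_sub hwN
  have hgv1 : p.reverse.getVert 1 = w0 := by
    rw [hq']
    simp [Walk.getVert_cons_succ]
  by_cases hws : w ∈ p.support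
  · -- cycle found
    have hrp : (p.dropUntil w hws).IsPath := hp.dropUntil hws
    refine ⟨v, Walk.cons hvwG (p.dropUntil w hws), ?_, ?_⟩
    · rw [Walk.cons_isCycle_iff]
      refine ⟨hrp, fun hmem => ?_⟩
      have hpe : s(v, w) ∈ p.reverse.edges := by
        rw [Walk.edges_reverse, List.mem_reverse]
        exact Walk.edges_dropUntil_subset p hws hmem
      have := end_edge_eq_snd p.reverse hq hpe
      rw [hgv1] at this
      exact hww0 this
    · intro e he
      rw [Walk.edges_cons, List.mem_cons] at he
      rcases he with rfl | he
      · exact hvwH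
      · exact hpH e (Walk.edges_dropUntil_subset p hws he)
  · -- extend the path, contradiction with maximality
    exfalso
    have hp' : (Walk.cons hvwG.symm p.reverse).IsPath := by
      rw [Walk.cons_isPath_iff]
      refine ⟨hq, ?_⟩
      rw [Walk.support_reverse, List.mem_reverse]
      exact hws
    have hmem : (Walk.cons hvwG.symm p.reverse).length ∈ L := by
      refine ⟨w, u, _, hp', ?_, by simp, rfl⟩
      intro e he
      rw [Walk.edges_cons, List.mem_cons] at he
      rcases he with rfl | he
      · rwa [Sym2.eq_swap]
      · exact hpH e (by rwa [Walk.edges_reverse, List.mem_reverse] at he)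
    have : (Walk.cons hvwG.symm p.reverse).length ≤ sSup L :=
      le_csSup ⟨Fintype.card V, hLbdd⟩ hmem
    rw [Walk.length_cons, Walk.length_reverse] at this
    omega

lemma cycle_decomp [Fintype V] (H : G.Subgraph)
    (hev : ∀ v, Even ((H.neighborSet v).ncard)) :
    ∃ (N : ℕ) (f : Fin N → Σ v : V, G.Walk v v),
      (∀ j, (f j).2.IsCycle) ∧
      (∀ i j, i ≠ j → ∀ e ∈ (f i).2.edges, e ∉ (f j).2.edges) ∧
      (⋃ j, {e | e ∈ (f j).2.edges}) = H.edgeSet := by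
  classical
  generalize hn : H.edgeSet.ncard = n
  induction n using Nat.strong_induction_on generalizing H with
  | _ n IH =>
    rcases Set.eq_empty_or_nonempty H.edgeSet with hemp | hne
    · exact ⟨0, Fin.elim0, fun j => j.elim0, fun i => i.elim0,
        by rw [hemp]; exact Set.iUnion_of_empty _⟩
    obtain ⟨v₀, c₀, hc₀, hc₀H⟩ := exists_cycle_of_even_degree hev hne
    have hc₀trail : c₀.IsTrail := hc₀.isCircuit.isTrail
    set Ec : Set (Sym2 V) := {e | e ∈ c₀.edges} with hEc
    have hEcsub : Ec ⊆ H.edgeSet := fun e he => hc₀H e he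
    have hEcne : Ec.Nonempty := by
      have h3 := hc₀.three_le_length
      have : 0 < c₀.edges.length := by rw [Walk.length_edges]; omega
      obtain ⟨e, he⟩ := List.exists_mem_of_length_pos this
      exact ⟨e, he⟩
    have hEc1 : 1 ≤ Ec.ncard := (Set.ncard_pos (Set.toFinite _)).mpr hEcne
    set H' := H.deleteEdges Ec with hH'
    have hH'edge : H'.edgeSet = H.edgeSet \ Ec := Subgraph.edgeSet_deleteEdges' H Ec
    have hH'nb : ∀ x, H'.neighborSet x
        = H.neighborSet x \ c₀.toSubgraph.neighborSet x := by
      intro x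
      ext y
      simp only [Set.mem_diff, Subgraph.mem_neighborSet, Subgraph.deleteEdges_adj,
        hEc, Set.mem_setOf_eq, toSubgraph_adj_iff_mem_edges, H']
    have hH'ev : ∀ x, Even ((H'.neighborSet x).ncard) := by
      intro x
      rw [hH'nb x, Set.ncard_diff ?_ (Set.toFinite _)]
      · exact (hev x).tsub (even_ncard_neighborSet_toSubgraph hc₀trail x)
      · intro y hy
        rw [neighborSet_toSubgraph_eq, Set.mem_setOf_eq] at hy
        exact Subgraph.mem_edgeSet.mp (hc₀H _ hy)
    have hlt : H'.edgeSet.ncard < n := by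
      rw [hH'edge, Set.ncard_diff hEcsub (Set.toFinite _)]
      have hn1 : 1 ≤ n := hn ▸ (Set.ncard_pos (Set.toFinite _)).mpr hne
      have hle : Ec.ncard ≤ H.edgeSet.ncard := Set.ncard_le_ncard hEcsub (Set.toFinite _)
      omega
    obtain ⟨N, f, hcyc, hdisj, hcov⟩ := IH _ hlt H' hH'ev rfl
    have hfsub : ∀ j, ∀ e ∈ (f j).2.edges, e ∈ H'.edgeSet := by
      intro j e he
      rw [← hcov]
      exact Set.mem_iUnion.mpr ⟨j, he⟩
    refine ⟨N + 1, Fin.cons ⟨v₀, c₀⟩ f, ?_, ?_, ?_⟩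
    · intro j
      rcases Fin.eq_zero_or_eq_succ j with rfl | ⟨j', rfl⟩
      · rw [Fin.cons_zero]; exact hc₀
      · rw [Fin.cons_succ]; exact hcyc j'
    · intro i j hij
      have hnotEc : ∀ m, ∀ e ∈ (f m).2.edges, e ∉ c₀.edges := by
        intro m e he hec
        have := hfsub m e he
        rw [hH'edge] at this
        exact this.2 hec
      rcases Fin.eq_zero_or_eq_succ i with rfl | ⟨i', rfl⟩ <;>
        rcases Fin.eq_zero_or_eq_succ j with rfl | ⟨j', rfl⟩
      · exact absurd rfl hij
      · intro e he hj'
        exact hnotEc j' e (by rw [Fin.cons_succ] at hj'; exact hj') (by rw [Fin.cons_zero] at he; exact he)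
      · intro e he hj'
        exact hnotEc i' e (by rw [Fin.cons_succ] at he; exact he) (by rw [Fin.cons_zero] at hj'; exact hj')
      · have : i' ≠ j' := fun h => hij (congrArg Fin.succ h)
        rw [Fin.cons_succ, Fin.cons_succ]; exact hdisj i' j' this
    · ext e
      simp only [Set.mem_iUnion, Set.mem_setOf_eq]
      constructor
      · rintro ⟨j, hj⟩
        rcases Fin.eq_zero_or_eq_succ j with rfl | ⟨j', rfl⟩
        · exact hEcsub (by rw [Fin.cons_zero] at hj; exact hj)
        · have : e ∈ H'.edgeSet := hfsub j' e (by rw [Fin.cons_succ] at hj; exact hj)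
          rw [hH'edge] at this
          exact this.1
      · intro he
        by_cases hec : e ∈ c₀.edges
        · exact ⟨0, by rw [Fin.cons_zero]; exact hec⟩
        · have : e ∈ H'.edgeSet := by rw [hH'edge]; exact ⟨he, hec⟩
          rw [← hcov] at this
          obtain ⟨j, hj⟩ := Set.mem_iUnion.mp this
          exact ⟨j.succ, by rw [Fin.cons_succ]; exact hj⟩
end E

section F
variable {V : Type*} {G : SimpleGraph V} {α : Type*}

lemma neighborSet_finsetSup [DecidableEq α] (T : Finset α) (F : α → G.Subgraph) (x : V) :
    ((T.sup F).neighborSet x) = ⋃ a ∈ T, (F a).neighborSet x := by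
  induction T using Finset.induction with
  | empty => simp [Subgraph.neighborSet_bot]
  | @insert a T ha ih =>
    rw [Finset.sup_insert, Subgraph.neighborSet_sup, ih, Finset.set_biUnion_insert]

lemma edgeSet_finsetSup [DecidableEq α] (T : Finset α) (F : α → G.Subgraph) :
    ((T.sup F).edgeSet) = ⋃ a ∈ T, (F a).edgeSet := by
  induction T using Finset.induction with
  | empty => simp
  | @insert a T ha ih =>
    rw [Finset.sup_insert, Subgraph.edgeSet_sup, ih, Finset.set_biUnion_insert]

lemma connected_finsetSup [DecidableEq α] {Γ : SimpleGraph α} {T : Finset α}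
    (hne : T.Nonempty) (hconn : ConnOn Γ T) {F : α → G.Subgraph}
    (hF : ∀ a, (F a).Connected)
    (hadj : ∀ a b, Γ.Adj a b → ((F a).verts ∩ (F b).verts).Nonempty) :
    (T.sup F).Connected := by
  classical
  induction T using Finset.strongInduction with
  | _ T IH =>
    obtain ⟨r, hr⟩ := hne
    by_cases h1 : T.card ≤ 1
    · have : T = {r} := by
        apply Finset.eq_singleton_iff_unique_mem.mpr
        refine ⟨hr, fun x hx => ?_⟩
        by_contra hxr
        have : 2 ≤ T.card := Finset.one_lt_card.mpr ⟨x, hx, r, hr, hxr⟩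
        omega
      rw [this, Finset.sup_singleton]
      exact hF r
    · obtain ⟨v, hv, hvr, hconn', u, hu, hadjvu⟩ := connOn_peel hconn hr (by omega)
      have hTv : T = insert v (T.erase v) := (Finset.insert_erase hv).symm
      rw [hTv, Finset.sup_insert]
      have hrec : ((T.erase v).sup F).Connected :=
        IH (T.erase v) (Finset.erase_ssubset hv) ⟨u, hu⟩ hconn'
      apply Subgraph.connected_sup (hF v).preconnected hrec.preconnected
      obtain ⟨x, hx1, hx2⟩ := hadj v u hadjvu
      refine ⟨x, ?_⟩
      rw [Subgraph.verts_inf]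
      refine ⟨hx1, ?_⟩
      exact (Finset.le_sup (f := F) hu).1 hx2

lemma intersection_graph_reachable {N : ℕ} (f : Fin N → Σ v : V, G.Walk v v)
    (hcov : (⋃ j, {e | e ∈ (f j).2.edges}) = G.edgeSet) (hGconn : G.Connected) :
    ∀ i j : Fin N,
      (SimpleGraph.fromRel
        (fun i j => ∃ x, x ∈ (f i).2.support ∧ x ∈ (f j).2.support)).Reachable i j := by
  set Γ := SimpleGraph.fromRel
    (fun i j => ∃ x, x ∈ (f i).2.support ∧ x ∈ (f j).2.support) with hΓ
  have hshare : ∀ (i j : Fin N) (x : V),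
      x ∈ (f i).2.support → x ∈ (f j).2.support → Γ.Reachable i j := by
    intro i j x hxi hxj
    by_cases hij : i = j
    · exact hij ▸ Reachable.refl i
    · exact Adj.reachable (by rw [hΓ, fromRel_adj]; exact ⟨hij, Or.inl ⟨x, hxi, hxj⟩⟩)
  have main : ∀ (a b : V) (p : G.Walk a b) (i j : Fin N),
      a ∈ (f i).2.support → b ∈ (f j).2.support → Γ.Reachable i j := by
    intro a b p
    induction p with
    | nil => exact fun i j hai hbj => hshare i j _ hai hbj
    | @cons a c b h p ih =>
      intro i j hai hbj
      have he : s(a, c) ∈ G.edgeSet := h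
      rw [← hcov] at he
      obtain ⟨l, hl⟩ := Set.mem_iUnion.mp he
      have hal : a ∈ (f l).2.support := Walk.fst_mem_support_of_mem_edges _ hl
      have hcl : c ∈ (f l).2.support := Walk.snd_mem_support_of_mem_edges _ hl
      exact (hshare i l a hai hal).trans (ih l j hcl hbj)
  intro i j
  exact main _ _ ((hGconn ((f i).1) ((f j).1)).some) i j
    (f i).2.start_mem_support (f j).2.start_mem_support


lemma ncard_iUnion_edges {N : ℕ} (f : Fin N → Σ v : V, G.Walk v v)
    (htrail : ∀ j, (f j).2.IsTrail)
    (hdisj : ∀ i j, i ≠ j → ∀ e ∈ (f i).2.edges, e ∉ (f j).2.edges) :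
    (⋃ j, {e | e ∈ (f j).2.edges}).ncard = ∑ j : Fin N, (f j).2.length := by
  classical
  have h1 : (⋃ j, {e | e ∈ (f j).2.edges})
      = ⋃ j ∈ (Finset.univ : Finset (Fin N)), {e | e ∈ (f j).2.edges} := by simp
  rw [h1, ncard_biUnion_eq _ _ (fun j => (f j).2.edges.finite_toSet) ?_]
  · apply Finset.sum_congr rfl
    intro j _
    have h2 : {e | e ∈ (f j).2.edges} = (f j).2.toSubgraph.edgeSet :=
      ((f j).2.edgeSet_toSubgraph).symm
    rw [h2, ncard_edgeSet_toSubgraph_eq_length (htrail j)]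
  · intro a _ b _ hab
    rw [Set.disjoint_left]
    exact fun e he he' => hdisj a b hab e he he'

end F



/-- An eulerian graph `G` with `k ≡ |E(G)| (mod 2)` admits a `k`-odd decomposition
iff it contains at least `k` pairwise edge-disjoint odd circuits. -/
theorem eulerian_kOddDecomposition_iff {V : Type*} [Fintype V] (G : SimpleGraph V)
    (hconn : G.Connected) (heven : ∀ v : V, Even ((G.neighborSet v).ncard))
    (k : ℕ) (hk : 0 < k) (hpar : k % 2 = G.edgeSet.ncard % 2) :
    (∃ D : Fin k → G.Subgraph, IsKOddDecomposition G k D) ↔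
      HasKEdgeDisjointOddCircuits G k := by
  classical
  constructor
  · rintro ⟨D, hDeul, hDodd, hDdisj, hDcov⟩
    have hkey : ∀ i : Fin k, ∃ s : Σ v : V, G.Walk v v, s.2.IsCycle ∧ Odd s.2.length ∧
        ∀ e ∈ s.2.edges, e ∈ (D i).edgeSet := by
      intro i
      have hev : ∀ v, Even (((D i).neighborSet v).ncard) := by
        intro v
        by_cases hv : v ∈ (D i).verts
        · exact (hDeul i).2 v hv
        · have hemp : (D i).neighborSet v = ∅ := by
            ext y
            simp only [Subgraph.mem_neighborSet, Set.mem_empty_iff_false, iff_false]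
            intro h
            exact hv ((D i).edge_vert h)
          simp [hemp]
      obtain ⟨N, f, hcyc, hdisj, hcov⟩ := cycle_decomp (D i) hev
      have hncard : (D i).edgeSet.ncard = ∑ j : Fin N, (f j).2.length := by
        rw [← hcov, ncard_iUnion_edges f (fun j => (hcyc j).isCircuit.isTrail) hdisj]
      have hodd := hDodd i
      rw [hncard] at hodd
      have hfil : ((Finset.univ : Finset (Fin N)).filter
          (fun j => Odd ((f j).2.length))).card % 2 = 1 := by
        rw [← sum_mod_two_eq_card_filter_odd]
        exact Nat.odd_iff.mp hodd
      have hne : ((Finset.univ : Finset (Fin N)).filter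
          (fun j => Odd ((f j).2.length))).Nonempty := by
        rw [← Finset.card_pos]
        omega
      obtain ⟨j, hj⟩ := hne
      rw [Finset.mem_filter] at hj
      refine ⟨f j, hcyc j, hj.2, fun e he => ?_⟩
      rw [← hcov]
      exact Set.mem_iUnion.mpr ⟨j, he⟩
    choose s hscyc hsodd hssub using hkey
    refine ⟨fun i => (s i).1, fun i => (s i).2, hscyc, hsodd, ?_⟩
    intro i j hij e hei hej
    exact Set.disjoint_left.mp (hDdisj i j hij) (hssub i e hei) (hssub j e hej)
  · rintro ⟨u, c, hcyc, hodd, hdisj⟩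
    -- Step 1: delete the k odd circuits; the rest still has all even degrees.
    set Ec : Fin k → Set (Sym2 V) := fun i => {e | e ∈ (c i).edges} with hEc
    set E : Set (Sym2 V) := ⋃ i, Ec i with hE
    have hEsub : E ⊆ G.edgeSet := by
      intro e he
      obtain ⟨i, hi⟩ := Set.mem_iUnion.mp he
      exact (c i).edges_subset_edgeSet hi
    set H₀ : G.Subgraph := (⊤ : G.Subgraph).deleteEdges E with hH₀
    have hH₀edge : H₀.edgeSet = G.edgeSet \ E := by
      rw [hH₀, Subgraph.edgeSet_deleteEdges', Subgraph.edgeSet_top]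
    have hnbsub : ∀ (x : V) (i : Fin k),
        (c i).toSubgraph.neighborSet x ⊆ G.neighborSet x := by
      intro x i y hy
      rw [neighborSet_toSubgraph_eq, Set.mem_setOf_eq] at hy
      exact (c i).edges_subset_edgeSet hy
    have hnbdisj : ∀ (x : V) (i j : Fin k), i ≠ j →
        Disjoint ((c i).toSubgraph.neighborSet x) ((c j).toSubgraph.neighborSet x) := by
      intro x i j hij
      rw [Set.disjoint_left]
      intro y hyi hyj
      rw [neighborSet_toSubgraph_eq, Set.mem_setOf_eq] at hyi hyj
      exact hdisj i j hij _ hyi hyj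
    have hH₀nb : ∀ x, H₀.neighborSet x
        = G.neighborSet x \ ⋃ i, (c i).toSubgraph.neighborSet x := by
      intro x
      ext y
      simp only [Subgraph.mem_neighborSet, hH₀, Subgraph.deleteEdges_adj, Subgraph.top_adj,
        Set.mem_diff, mem_neighborSet, Set.mem_iUnion, toSubgraph_adj_iff_mem_edges, hE, hEc,
        Set.mem_setOf_eq, not_exists]
    have hH₀ev : ∀ x, Even ((H₀.neighborSet x).ncard) := by
      intro x
      rw [hH₀nb x]
      have hBsub : (⋃ i, (c i).toSubgraph.neighborSet x) ⊆ G.neighborSet x := by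
        intro y hy
        obtain ⟨i, hi⟩ := Set.mem_iUnion.mp hy
        exact hnbsub x i hi
      rw [Set.ncard_diff hBsub (Set.toFinite _)]
      apply (heven x).tsub
      have h1 : (⋃ i, (c i).toSubgraph.neighborSet x)
          = ⋃ i ∈ (Finset.univ : Finset (Fin k)), (c i).toSubgraph.neighborSet x := by simp
      rw [h1, ncard_biUnion_eq _ _ (fun i => (c i).finite_neighborSet_toSubgraph)
        (fun a _ b _ hab => hnbdisj x a b hab)]
      exact Finset.even_sum _ (fun i _ =>
        even_ncard_neighborSet_toSubgraph (hcyc i).isCircuit.isTrail x)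
    -- Step 2: decompose the rest into cycles, and form the combined family.
    obtain ⟨N, g, hgcyc, hgdisj, hgcov⟩ := cycle_decomp H₀ hH₀ev
    set F : Fin (k + N) → Σ v : V, G.Walk v v :=
      Fin.addCases (fun i => ⟨u i, c i⟩) g with hF
    have hFleft : ∀ i : Fin k, F (Fin.castAdd N i) = ⟨u i, c i⟩ := fun i => by
      rw [hF]; exact Fin.addCases_left i
    have hFright : ∀ j : Fin N, F (Fin.natAdd k j) = g j := fun j => by
      rw [hF]; exact Fin.addCases_right j
    have hgsub : ∀ j, ∀ e ∈ (g j).2.edges, e ∈ H₀.edgeSet := fun j e he => by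
      rw [← hgcov]; exact Set.mem_iUnion.mpr ⟨j, he⟩
    have hFcyc : ∀ m, (F m).2.IsCycle := by
      intro m
      refine Fin.addCases (motive := fun m => ((F m).2).IsCycle) ?_ ?_ m
      · intro i; rw [hFleft i]; exact hcyc i
      · intro j; rw [hFright j]; exact hgcyc j
    have hFtrail : ∀ m, (F m).2.IsTrail := fun m => (hFcyc m).isCircuit.isTrail
    have hFdisj : ∀ m n, m ≠ n → ∀ e ∈ (F m).2.edges, e ∉ (F n).2.edges := by
      have hcg : ∀ (i : Fin k) (j : Fin N), ∀ e ∈ (c i).edges, e ∉ (g j).2.edges := by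
        intro i j e he hg
        have h1 : e ∈ H₀.edgeSet := hgsub j e hg
        rw [hH₀edge] at h1
        exact h1.2 (Set.mem_iUnion.mpr ⟨i, he⟩)
      intro m n hmn
      refine Fin.addCases
        (motive := fun m => m ≠ n → ∀ e ∈ (F m).2.edges, e ∉ (F n).2.edges) ?_ ?_ m hmn <;>
        clear hmn m
      · intro i
        refine Fin.addCases
          (motive := fun n => Fin.castAdd N i ≠ n →
            ∀ e ∈ (F (Fin.castAdd N i)).2.edges, e ∉ (F n).2.edges) ?_ ?_ n
        · intro i' hne e he he'
          rw [hFleft] at he he'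
          exact hdisj i i' (fun h => hne (congrArg _ h)) e he he'
        · intro j _ e he he'
          rw [hFleft] at he
          rw [hFright] at he'
          exact hcg i j e he he'
      · intro j
        refine Fin.addCases
          (motive := fun n => Fin.natAdd k j ≠ n →
            ∀ e ∈ (F (Fin.natAdd k j)).2.edges, e ∉ (F n).2.edges) ?_ ?_ n
        · intro i _ e he he'
          rw [hFright] at he
          rw [hFleft] at he'
          exact hcg i j e he' he
        · intro j' hne e he he'
          rw [hFright] at he he'
          exact hgdisj j j' (fun h => hne (congrArg _ h)) e he he'
    have hFcov : (⋃ m, {e | e ∈ (F m).2.edges}) = G.edgeSet := by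
      ext e
      simp only [Set.mem_iUnion, Set.mem_setOf_eq]
      constructor
      · rintro ⟨m, hm⟩
        revert hm
        refine Fin.addCases (motive := fun m => e ∈ (F m).2.edges → e ∈ G.edgeSet) ?_ ?_ m
        · intro i hi
          rw [hFleft i] at hi
          exact (c i).edges_subset_edgeSet hi
        · intro j hj
          rw [hFright j] at hj
          have h1 := hgsub j e hj
          rw [hH₀edge] at h1
          exact h1.1
      · intro he
        by_cases heE : e ∈ E
        · obtain ⟨i, hi⟩ := Set.mem_iUnion.mp heE
          exact ⟨Fin.castAdd N i, by rw [hFleft i]; exact hi⟩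
        · have h1 : e ∈ H₀.edgeSet := by rw [hH₀edge]; exact ⟨he, heE⟩
          rw [← hgcov] at h1
          obtain ⟨j, hj⟩ := Set.mem_iUnion.mp h1
          exact ⟨Fin.natAdd k j, by rw [hFright j]; exact hj⟩
    -- Step 3: the intersection graph of the cycles is connected.
    set Γ : SimpleGraph (Fin (k + N)) := SimpleGraph.fromRel
      (fun m n => ∃ x, x ∈ (F m).2.support ∧ x ∈ (F n).2.support) with hΓ
    have hreach := intersection_graph_reachable F hFcov hconn
    have hU : ConnOn Γ (Finset.univ : Finset (Fin (k + N))) := by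
      intro a _ b _
      exact ⟨(hreach a b).some, fun x _ => Finset.mem_univ x⟩
    -- Step 4: partition the cycles into k connected groups of odd total length.
    have hcastinj : Function.Injective (fun i : Fin k => Fin.castAdd N i) :=
      fun a b h => Fin.castAdd_injective _ _ h
    have himg : (Finset.univ.image (fun i : Fin k => Fin.castAdd N i))
        ⊆ Finset.univ.filter (fun m => Odd ((F m).2.length)) := by
      intro m hm
      obtain ⟨i, _, rfl⟩ := Finset.mem_image.mp hm
      refine Finset.mem_filter.mpr ⟨Finset.mem_univ _, ?_⟩
      rw [hFleft i]
      exact hodd i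
    have hcard1 : k ≤ (Finset.univ.filter (fun m => Odd ((F m).2.length))).card := by
      calc k = (Finset.univ.image (fun i : Fin k => Fin.castAdd N i)).card := by
              rw [Finset.card_image_of_injective _ hcastinj, Finset.card_univ,
                Fintype.card_fin]
        _ ≤ _ := Finset.card_le_card himg
    have hsum : ∑ m : Fin (k + N), (F m).2.length = G.edgeSet.ncard := by
      rw [← hFcov, ncard_iUnion_edges F hFtrail hFdisj]
    have hparity : (Finset.univ.filter (fun m => Odd ((F m).2.length))).card % 2
        = k % 2 := by
      have h1 := sum_mod_two_eq_card_filter_odd (Finset.univ : Finset (Fin (k + N)))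
        (fun m => (F m).2.length)
      rw [hsum] at h1
      rw [← h1]
      exact hpar.symm
    obtain ⟨P, hPconn, hPodd, hPdisj, hPcover⟩ :=
      connOn_partition (Γ := Γ) (fun m => (F m).2.length) k hk Finset.univ hU hcard1 hparity
    have hPsumodd : ∀ i, Odd (∑ m ∈ P i, (F m).2.length) := hPodd
    have hPne : ∀ i, (P i).Nonempty := by
      intro i
      rcases Finset.eq_empty_or_nonempty (P i) with h | h
      · exfalso
        have h2 := hPsumodd i
        rw [h] at h2
        simp at h2
      · exact h
    -- Step 5: the decomposition.
    refine ⟨fun i => (P i).sup (fun m => (F m).2.toSubgraph), ?_, ?_, ?_, ?_⟩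
    · -- each part is an eulerian subgraph
      intro i
      constructor
      · -- connected
        refine connected_finsetSup (hPne i) (hPconn i)
          (fun m => (F m).2.toSubgraph_connected) ?_
        intro a b hab
        rw [hΓ, fromRel_adj] at hab
        rcases hab.2 with ⟨x, hx1, hx2⟩ | ⟨x, hx1, hx2⟩
        · exact ⟨x, (Walk.mem_verts_toSubgraph _).mpr hx1,
            (Walk.mem_verts_toSubgraph _).mpr hx2⟩
        · exact ⟨x, (Walk.mem_verts_toSubgraph _).mpr hx2,
            (Walk.mem_verts_toSubgraph _).mpr hx1⟩
      · -- even degrees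
        intro v _
        rw [neighborSet_finsetSup, ncard_biUnion_eq _ _
          (fun m => (F m).2.finite_neighborSet_toSubgraph) ?_]
        · exact Finset.even_sum _ (fun m _ =>
            even_ncard_neighborSet_toSubgraph (hFtrail m) v)
        · intro a _ b _ hab
          rw [Set.disjoint_left]
          intro y hya hyb
          rw [neighborSet_toSubgraph_eq, Set.mem_setOf_eq] at hya hyb
          exact hFdisj a b hab _ hya hyb
    · -- odd number of edges in each part
      intro i
      rw [edgeSet_finsetSup, ncard_biUnion_eq _ _
        (fun m => by rw [Walk.edgeSet_toSubgraph]; exact (F m).2.edges.finite_toSet) ?_]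
      · have h1 : ∀ m ∈ P i, ((F m).2.toSubgraph.edgeSet).ncard = (F m).2.length :=
          fun m _ => ncard_edgeSet_toSubgraph_eq_length (hFtrail m)
        rw [Finset.sum_congr rfl h1]
        exact hPsumodd i
      · intro a _ b _ hab
        rw [Set.disjoint_left]
        intro e hea heb
        rw [Walk.edgeSet_toSubgraph, Walk.mem_edgeSet] at hea heb
        exact hFdisj a b hab e hea heb
    · -- pairwise edge-disjoint parts
      intro i j hij
      rw [Set.disjoint_left]
      intro e hei hej
      rw [edgeSet_finsetSup] at hei hej
      obtain ⟨a, ha, hea⟩ := Set.mem_iUnion₂.mp hei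
      obtain ⟨b, hb, heb⟩ := Set.mem_iUnion₂.mp hej
      rw [Walk.edgeSet_toSubgraph, Walk.mem_edgeSet] at hea heb
      by_cases hab : a = b
      · subst hab
        exact Finset.disjoint_left.mp (hPdisj i j hij) ha hb
      · exact hFdisj a b hab e hea heb
    · -- the parts cover all edges
      ext e
      constructor
      · intro he
        obtain ⟨i, hi⟩ := Set.mem_iUnion.mp he
        rw [edgeSet_finsetSup] at hi
        obtain ⟨a, _, hea⟩ := Set.mem_iUnion₂.mp hi
        rw [Walk.edgeSet_toSubgraph, Walk.mem_edgeSet] at hea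
        rw [← hFcov]
        exact Set.mem_iUnion.mpr ⟨a, hea⟩
      · intro he
        rw [← hFcov] at he
        obtain ⟨m, hm⟩ := Set.mem_iUnion.mp he
        obtain ⟨i, hi⟩ := (hPcover m).mp (Finset.mem_univ m)
        refine Set.mem_iUnion.mpr ⟨i, ?_⟩
        rw [edgeSet_finsetSup]
        exact Set.mem_iUnion₂.mpr ⟨m, hi, by rw [Walk.edgeSet_toSubgraph]; exact hm⟩
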